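/- (Lemma 1) Let Δt > 0, a_brake > 0, a_max > 0 be real numbers and let I be a nonempty finite index set of leading objects. For each i ∈ I let d_i ≥ 0 be the distance to object i, and let object i be either a vehicle, with speed v_i ≥ 0 and maximum braking rate a_brake_i ≥ a_brake, or a non-vehicle. Define c_i = max(0, v_e²/(2·a_brake) − v_i²/(2·a_brake_i)) and v_max_i = sqrt(2·a_brake·(d_i + v_i²/(2·a_brake_i))) for vehicle objects, and c_i = v_e²/(2·a_brake) and v_max_i = sqrt(2·a_brake·d_i) for non-vehicle objects, where v_e ≥ 0 is the ego speed. Set v_max = min over i ∈ I of v_max_i and let the ego apply the controller command a = min(a_max, (v_max − a_brake·Δt − v_e)/Δt). Assume rules r1 and r2 hold at the current step, i.e., for every i ∈ I: d_i ≥ 0 and c_i ≤ d_i. Over the time step, assume each vehicle object i applies an acceleration a_i with a_i ≥ −a_brake_i and v_i + a_i·Δt ≥ 0 and travels displacement δ_i = v_i·Δt + (1/2)·a_i·Δt², and each non-vehicle object travels a displacement δ_i ≥ 0. Let v_e' = v_e + a·Δt, v_i' = v_i + a_i·Δt for vehicles, d_i' = d_i + δ_i − (v_e·Δt + (1/2)·a·Δt²),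 and let c_i' be the required clearance computed from v_e', v_i', a_brake, a_brake_i (with the same vehicle/non-vehicle case split). Then for every i ∈ I: d_i' ≥ 0 and c_i' ≤ d_i', i.e., rules r1 (with ε = 0) and r2 have zero violation at the next time step. -/

import Mathlib

private lemma div2_le_iff {x y b : ℝ} (hb : 0 < b) : x / (2*b) ≤ y ↔ x ≤ 2*b*y := by
  rw [div_le_iff₀ (by linarith : (0:ℝ) < 2*b), mul_comm]

private lemma le_div2_iff {x y b : ℝ} (hb : 0 < b) : y ≤ x / (2*b) ↔ 2*b*y ≤ x := by
  rw [le_div_iff₀ (by linarith : (0:ℝ) < 2*b), mul_comm]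

lemma auxA (b ab dt s vi dd dx dl : ℝ) (hb : 0 < b) (hba : b ≤ ab) (hdt : 0 < dt)
    (hvi : 0 ≤ vi) (hcase : vi ≤ ab * dt) (hs0 : 0 ≤ s)
    (hs2 : ab * s ^ 2 = 2 * b * ab * dd + b * vi ^ 2)
    (hdx : dx ≤ s * dt - (1/2) * b * dt ^ 2)
    (hdl : vi * dt / 2 ≤ dl) :
    0 ≤ dd + dl - dx := by
  have hab : 0 < ab := lt_of_lt_of_le hb hba
  nlinarith [mul_nonneg hab.le (sq_nonneg (s - b*dt)),
    mul_nonneg hb.le (mul_nonneg hvi (by linarith : 0 ≤ ab*dt - vi)),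
    mul_pos hb hab,
    mul_nonneg (mul_pos hb hab).le (by linarith : 0 ≤ dl - vi*dt/2),
    mul_nonneg (mul_pos hb hab).le (by linarith : 0 ≤ s*dt - (1/2)*b*dt^2 - dx)]

lemma auxB (b ab dt s vi dd dx dl : ℝ) (hb : 0 < b) (hba : b ≤ ab) (hdt : 0 < dt)
    (hcase : ab * dt ≤ vi) (hdd : 0 ≤ dd) (hs0 : 0 ≤ s)
    (hs2 : ab * s ^ 2 = 2 * b * ab * dd + b * vi ^ 2)
    (hdx : dx ≤ s * dt - (1/2) * b * dt ^ 2)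
    (hdl : vi * dt - (1/2) * ab * dt ^ 2 ≤ dl) :
    0 ≤ dd + dl - dx := by
  have hab : 0 < ab := lt_of_lt_of_le hb hba
  have hvi : 0 ≤ vi := le_trans (by positivity) hcase
  obtain ⟨q, hq0, hq2⟩ : ∃ q : ℝ, 0 ≤ q ∧ q^2 = ab :=
    ⟨Real.sqrt ab, Real.sqrt_nonneg _, Real.sq_sqrt hab.le⟩
  obtain ⟨t, ht0, ht2⟩ : ∃ t : ℝ, 0 ≤ t ∧ t^2 = b :=
    ⟨Real.sqrt b, Real.sqrt_nonneg _, Real.sq_sqrt hb.le⟩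
  have htq : t ≤ q := by nlinarith
  have h1 : t * vi ≤ q * s := by
    by_contra hcon
    push_neg at hcon
    nlinarith [mul_nonneg hq0 hs0, mul_nonneg ht0 hvi,
      mul_nonneg (mul_nonneg hb.le hab.le) hdd]
  have h2 : q * b ≤ t * ab := by
    nlinarith [mul_nonneg (mul_nonneg ht0 hq0) (by linarith : 0 ≤ q - t)]
  have hAmB : 0 ≤ q*(s - b*dt) - t*(vi - ab*dt) := by nlinarith
  have hApB : 0 ≤ q*(s - b*dt) + t*(vi - ab*dt) := by
    have h3 : t*ab*dt ≤ t*vi := by nlinarith [mul_le_mul_of_nonneg_left hcase ht0]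
    have h4 : q*b*dt ≤ t*ab*dt := by nlinarith
    nlinarith
  have key : 0 ≤ ab*(s - b*dt)^2 - b*(vi - ab*dt)^2 := by
    have e : ab*(s - b*dt)^2 - b*(vi - ab*dt)^2 =
        (q*(s - b*dt) - t*(vi - ab*dt))*(q*(s - b*dt) + t*(vi - ab*dt)) := by
      rw [← hq2, ← ht2]; ring
    rw [e]; exact mul_nonneg hAmB hApB
  have p1 : 0 ≤ (b*ab) * (dl - (vi*dt - (1/2)*ab*dt^2)) :=
    mul_nonneg (mul_pos hb hab).le (by linarith)
  have p2 : 0 ≤ (b*ab) * ((s*dt - (1/2)*b*dt^2) - dx) :=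
    mul_nonneg (mul_pos hb hab).le (by linarith)
  have h5 : (b*ab)*0 ≤ (b*ab) * (dd + dl - dx) := by linarith [key, hs2, p1, p2]
  exact le_of_mul_le_mul_left h5 (mul_pos hb hab)

/-- Lemma 1: one application of the controller preserves zero violation of
rules r1 (collision avoidance, ε = 0) and r2 (obstacle clearance) for all
leading objects, vehicles and non-vehicles alike. -/
theorem lemma1_r1_r2_one_step_preserved
    {ι : Type*} (I : Finset ι) (hI : I.Nonempty) (veh : ι → Bool)
    (Δt a_brake a_max v_e : ℝ)
    (hdt : 0 < Δt) (hab : 0 < a_brake) (hamax : 0 < a_max) (hve : 0 ≤ v_e)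
    (d v abi ai δ : ι → ℝ)
    -- current state: vehicle objects have nonnegative speed and braking rate ≥ a_brake
    (hv : ∀ i ∈ I, veh i = true → 0 ≤ v i)
    (habi : ∀ i ∈ I, veh i = true → a_brake ≤ abi i)
    -- required clearance and maximum permissible speed, case-wise
    (c vmaxi : ι → ℝ)
    (hc : ∀ i ∈ I, c i =
      if veh i then max 0 (v_e ^ 2 / (2 * a_brake) - v i ^ 2 / (2 * abi i))
      else v_e ^ 2 / (2 * a_brake))
    (hvmaxi : ∀ i ∈ I, vmaxi i =
      if veh i then Real.sqrt (2 * a_brake * (d i + v i ^ 2 / (2 * abi i)))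
      else Real.sqrt (2 * a_brake * d i))
    (vmax a : ℝ)
    (hvmax : vmax = I.inf' hI vmaxi)
    -- the controller command
    (ha : a = min a_max ((vmax - a_brake * Δt - v_e) / Δt))
    -- rules r1 and r2 hold at the current step
    (hd : ∀ i ∈ I, 0 ≤ d i)
    (hcd : ∀ i ∈ I, c i ≤ d i)
    -- object behavior over the time step
    (hai : ∀ i ∈ I, veh i = true → -abi i ≤ ai i ∧ 0 ≤ v i + ai i * Δt)
    (hδveh : ∀ i ∈ I, veh i = true → δ i = v i * Δt + (1 / 2) * ai i * Δt ^ 2)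
    (hδnon : ∀ i ∈ I, veh i = false → 0 ≤ δ i)
    -- next-step quantities
    (v_e' : ℝ) (hve' : v_e' = v_e + a * Δt)
    (v' d' c' : ι → ℝ)
    (hv' : ∀ i ∈ I, veh i = true → v' i = v i + ai i * Δt)
    (hd' : ∀ i ∈ I, d' i = d i + δ i - (v_e * Δt + (1 / 2) * a * Δt ^ 2))
    (hc' : ∀ i ∈ I, c' i =
      if veh i then max 0 (v_e' ^ 2 / (2 * a_brake) - v' i ^ 2 / (2 * abi i))
      else v_e' ^ 2 / (2 * a_brake)) :
    ∀ i ∈ I, 0 ≤ d' i ∧ c' i ≤ d' i := by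
  -- global facts
  have hvm0 : 0 ≤ vmax := by
    rw [hvmax]
    apply Finset.le_inf' hI
    intro j hj
    rw [hvmaxi j hj]
    split <;> exact Real.sqrt_nonneg _
  have hvevm : v_e ≤ vmax := by
    rw [hvmax]
    apply Finset.le_inf' hI
    intro j hj
    have hcdj := hcd j hj
    rw [hc j hj] at hcdj
    rw [hvmaxi j hj]
    by_cases hvj : veh j = true
    · rw [if_pos hvj] at hcdj ⊢
      have habj := habi j hj hvj
      have habjp : 0 < abi j := lt_of_lt_of_le hab habj
      have h1 : v_e ^ 2 / (2 * a_brake) ≤ d j + v j ^ 2 / (2 * abi j) := by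
        have := le_trans (le_max_right _ _) hcdj
        linarith
      have h2 : v_e ^ 2 ≤ 2 * a_brake * (d j + v j ^ 2 / (2 * abi j)) :=
        (div2_le_iff hab).mp h1
      calc v_e = Real.sqrt (v_e ^ 2) := (Real.sqrt_sq hve).symm
        _ ≤ _ := Real.sqrt_le_sqrt h2
    · rw [if_neg hvj] at hcdj ⊢
      have h2 : v_e ^ 2 ≤ 2 * a_brake * d j := (div2_le_iff hab).mp hcdj
      calc v_e = Real.sqrt (v_e ^ 2) := (Real.sqrt_sq hve).symm
        _ ≤ _ := Real.sqrt_le_sqrt h2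
  have hu_le : v_e' ≤ vmax - a_brake * Δt := by
    have h1 : a ≤ (vmax - a_brake * Δt - v_e) / Δt := ha ▸ min_le_right _ _
    have h2 : a * Δt ≤ vmax - a_brake * Δt - v_e := by
      rw [← le_div_iff₀ hdt]; exact h1
    rw [hve']; linarith
  have hL1 : v_e' ^ 2 + a_brake * Δt * (v_e + v_e') ≤ vmax ^ 2 := by
    rcases le_or_gt 0 v_e' with hu0 | hu0
    · nlinarith [mul_nonneg hu0 (by linarith : 0 ≤ vmax - a_brake*Δt - v_e'),
        mul_nonneg hvm0 (by linarith : 0 ≤ vmax - a_brake*Δt - v_e'),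
        mul_nonneg (mul_pos hab hdt).le (by linarith : 0 ≤ vmax - v_e)]
    · have haeq : a = (vmax - a_brake * Δt - v_e) / Δt := by
        rcases le_or_gt a_max ((vmax - a_brake * Δt - v_e) / Δt) with hm | hm
        · exfalso
          have : a = a_max := ha ▸ min_eq_left hm
          nlinarith [mul_pos hamax hdt]
        · exact ha ▸ min_eq_right hm.le
      have hueq : v_e' = vmax - a_brake * Δt := by
        rw [hve', haeq]; field_simp; ring
      rw [hueq]
      nlinarith [mul_nonneg (mul_pos hab hdt).le (by linarith : 0 ≤ vmax - v_e)]
  -- per-object proof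
  intro i hi
  have hdi := hd i hi
  have hd'i := hd' i hi
  have hvmle : vmax ≤ vmaxi i := hvmax ▸ Finset.inf'_le _ hi
  have e3' : 2 * a_brake * (v_e * Δt + (1/2) * a * Δt ^ 2)
      = a_brake * Δt * (v_e + v_e') := by rw [hve']; ring
  by_cases hvi : veh i = true
  · -- vehicle object
    have habii := habi i hi hvi
    have hvii := hv i hi hvi
    have habip : 0 < abi i := lt_of_lt_of_le hab habii
    obtain ⟨hai1, hai2⟩ := hai i hi hvi
    have hδi := hδveh i hi hvi
    have hv'i := hv' i hi hvi
    set k : ℝ := v i ^ 2 / (2 * abi i) with hk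
    have hk0 : 0 ≤ k := by positivity
    have hkk : 2 * abi i * k = v i ^ 2 := by
      rw [hk]; field_simp
    have hs0 : 0 ≤ vmaxi i := by rw [hvmaxi i hi, if_pos hvi]; exact Real.sqrt_nonneg _
    have hs2 : vmaxi i ^ 2 = 2 * a_brake * (d i + k) := by
      rw [hvmaxi i hi, if_pos hvi]
      exact Real.sq_sqrt (by positivity)
    have hvm2 : vmax ^ 2 ≤ vmaxi i ^ 2 := pow_le_pow_left₀ hvm0 hvmle 2
    have hu2 : v_e' ^ 2 ≤ 2 * a_brake * (d i + k) - a_brake * Δt * (v_e + v_e') := by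
      linarith [hL1, hvm2, hs2.symm.le, hs2.le]
    have hδ0 : 0 ≤ δ i := by
      rw [hδi]
      linarith [mul_nonneg hai2 hdt.le, mul_nonneg hvii hdt.le]
    have hδ0' : 0 ≤ v i * Δt + (1/2) * ai i * Δt ^ 2 := by
      rw [← hδi]; exact hδ0
    have hw2 : v i ^ 2 - 2 * abi i * δ i ≤ v' i ^ 2 := by
      rw [hv'i, hδi]
      linarith [mul_nonneg (show (0:ℝ) ≤ ai i + abi i by linarith) hδ0']
    have hΔx : v_e * Δt + (1/2) * a * Δt ^ 2 ≤ vmaxi i * Δt - (1/2) * a_brake * Δt ^ 2 := by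
      have e1 : Δt * (v_e + (v_e + a * Δt)) ≤ Δt * (2 * vmaxi i - a_brake * Δt) :=
        mul_le_mul_of_nonneg_left (by rw [← hve']; linarith) hdt.le
      linarith [e1]
    have habis2 : abi i * vmaxi i ^ 2 = 2 * a_brake * abi i * d i + a_brake * v i ^ 2 := by
      linear_combination abi i * hs2 + a_brake * hkk
    have hd'0 : 0 ≤ d' i := by
      rw [hd'i]
      rcases le_or_gt (v i) (abi i * Δt) with hcase | hcase
      · have hδb : v i * Δt / 2 ≤ δ i := by
          rw [hδi]; linarith [mul_nonneg hdt.le hai2]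
        exact auxA a_brake (abi i) Δt (vmaxi i) (v i) (d i) _ (δ i)
          hab habii hdt hvii hcase hs0 habis2 hΔx hδb
      · have hδb : v i * Δt - (1/2) * abi i * Δt ^ 2 ≤ δ i := by
          rw [hδi]; linarith [mul_nonneg (sq_nonneg Δt) (by linarith : 0 ≤ ai i + abi i)]
        exact auxB a_brake (abi i) Δt (vmaxi i) (v i) (d i) _ (δ i)
          hab habii hdt hcase.le hdi hs0 habis2 hΔx hδb
    refine ⟨hd'0, ?_⟩
    rw [hc' i hi, if_pos hvi]
    apply max_le hd'0
    have hA : v_e' ^ 2 / (2 * a_brake) ≤ d i + k - (v_e * Δt + (1/2) * a * Δt ^ 2) := by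
      rw [div2_le_iff hab]
      linarith [hu2, e3']
    have hB : k - δ i ≤ v' i ^ 2 / (2 * abi i) := by
      rw [le_div2_iff habip]
      linarith [hw2, hkk]
    rw [hd'i]
    linarith [hA, hB]
  · -- non-vehicle object
    have hvif : veh i = false := by
      rw [Bool.not_eq_true] at hvi; exact hvi
    have hδ0 := hδnon i hi hvif
    have hs0 : 0 ≤ vmaxi i := by rw [hvmaxi i hi, if_neg hvi]; exact Real.sqrt_nonneg _
    have hs2 : vmaxi i ^ 2 = 2 * a_brake * d i := by
      rw [hvmaxi i hi, if_neg hvi]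
      exact Real.sq_sqrt (by positivity)
    have hvm2 : vmax ^ 2 ≤ vmaxi i ^ 2 := pow_le_pow_left₀ hvm0 hvmle 2
    have hu2 : v_e' ^ 2 ≤ 2 * a_brake * d i - a_brake * Δt * (v_e + v_e') := by
      linarith [hL1, hvm2, hs2.le]
    have hA : v_e' ^ 2 / (2 * a_brake) ≤ d i - (v_e * Δt + (1/2) * a * Δt ^ 2) := by
      rw [div2_le_iff hab]
      linarith [hu2, e3']
    have h0 : 0 ≤ v_e' ^ 2 / (2 * a_brake) := by positivity
    constructor
    · rw [hd'i]; linarith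
    · rw [hc' i hi, if_neg hvi, hd'i]; linarith
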